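/- Let ν be a probability measure on Cantor space with ν(w) > 0 for all strings w, let t > 0, and let U be any set of finite binary strings with Σ_{u ∈ U} ν(u)^t < ∞. Then the function d_U^t is a ν-t-gale. -/

import Mathlib

open Filter Topology

/-- A probability measure on Cantor space, given as a function on finite binary strings. -/
def IsProbMeasure (ν : List Bool → ℝ) : Prop :=
  ν [] = 1 ∧ (∀ w, 0 ≤ ν w) ∧ ∀ w, ν w = ν (w ++ [false]) + ν (w ++ [true])

/-- A `ν`-`s`-supergale. -/
def IsSupergale (ν : List Bool → ℝ) (s : ℝ) (d : List Bool → ℝ) : Prop :=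
  (∀ w, 0 ≤ d w) ∧
    ∀ w, ν (w ++ [false]) ^ s * d (w ++ [false]) + ν (w ++ [true]) ^ s * d (w ++ [true]) ≤
      ν w ^ s * d w

/-- A `ν`-`s`-gale. -/
def IsGale (ν : List Bool → ℝ) (s : ℝ) (d : List Bool → ℝ) : Prop :=
  (∀ w, 0 ≤ d w) ∧
    ∀ w, ν (w ++ [false]) ^ s * d (w ++ [false]) + ν (w ++ [true]) ^ s * d (w ++ [true]) =
      ν w ^ s * d w

/-- The length-`n` prefix of an infinite binary sequence. -/
def prefixSeq (z : ℕ → Bool) (n : ℕ) : List Bool := List.ofFn fun i : Fin n => z i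

/-- The success set `S^∞[d]`: sequences on whose prefixes `d` has limsup `∞`. -/
def SuccessSet (d : List Bool → ℝ) : Set (ℕ → Bool) :=
  {z | ∀ B : ℝ, ∃ n, B < d (prefixSeq z n)}

/-- A real-valued function on strings is computable if it has a uniformly computable
rational approximation to within `2 ^ (-r)`. -/
def ComputableRealFn (d : List Bool → ℝ) : Prop :=
  ∃ d' : List Bool → ℕ → ℚ,
    Computable (fun p : List Bool × ℕ => d' p.1 p.2) ∧
      ∀ x r, |(d' x r : ℝ) - d x| ≤ (2 : ℝ) ^ (-(r : ℤ))

/-- A real number is computable if the corresponding constant function is. -/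
def ComputableReal (s : ℝ) : Prop := ComputableRealFn fun _ => s

/-- Lower semicomputability (constructivity) of a real-valued function on strings. -/
def LowerSemicomputable (d : List Bool → ℝ) : Prop :=
  ∃ d' : List Bool → ℕ → ℚ,
    Computable (fun p : List Bool × ℕ => d' p.1 p.2) ∧
      (∀ x r, d' x r ≤ d' x (r + 1) ∧ (d' x r : ℝ) < d x) ∧
      ∀ x, Tendsto (fun r => (d' x r : ℝ)) atTop (𝓝 (d x))

/-- `X` has constructive `ν`-measure zero: some constructive `ν`-martingale succeeds on `X`. -/
def ConstructiveNullSet (ν : List Bool → ℝ) (X : Set (ℕ → Bool)) : Prop :=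
  ∃ d : List Bool → ℝ, LowerSemicomputable d ∧ IsGale ν 1 d ∧ X ⊆ SuccessSet d

/-- A well-balanced probability measure: `0 < ν w ≤ C * α ^ |w|` for some `0 < α < 1`, `C > 0`. -/
def WellBalanced (ν : List Bool → ℝ) : Prop :=
  ∃ α C : ℝ, 0 < α ∧ α < 1 ∧ 0 < C ∧ ∀ w : List Bool, 0 < ν w ∧ ν w ≤ C * α ^ w.length

/-- A prefix set: no element is a proper prefix of another element. -/
def IsPrefixSet (U : Set (List Bool)) : Prop :=
  ∀ u ∈ U, ∀ v ∈ U, u <+: v → u = v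

/-- The function `d_U^t` built from a set `U` of strings. -/
noncomputable def dU (ν : List Bool → ℝ) (t : ℝ) (U : Set (List Bool)) (w : List Bool) : ℝ :=
  ν w ^ (-t) *
    ((∑' u : {u : List Bool // w ++ u ∈ U}, ν (w ++ u.val) ^ t) +
      ∑ n ∈ Finset.range w.length,
        U.indicator (fun v => ν v ^ t / 2 ^ (w.length - n)) (w.take n))

/-- The uniform probability measure `μ(w) = 2 ^ (-|w|)`. -/
noncomputable def uniformMeasure : List Bool → ℝ := fun w => (2 : ℝ) ^ (-(w.length : ℤ))

private lemma cons_inj' : Function.Injective (fun p : Bool × List Bool => p.1 :: p.2) := by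
  intro p q hpq
  simpa [Prod.ext_iff] using hpq

private lemma tsum_split_cons (h : List Bool → ℝ) (hs : Summable h) :
    ∑' u, h u = h [] + ((∑' u, h (false :: u)) + ∑' u, h (true :: u)) := by
  classical
  rw [Summable.tsum_eq_add_tsum_ite hs ([] : List Bool)]
  congr 1
  set f : List Bool → ℝ := fun u => if u = ([] : List Bool) then 0 else h u with hfdef
  have hfind : f = Set.indicator {([] : List Bool)}ᶜ h := by
    funext u
    by_cases hu : u = [] <;> simp [hfdef, hu]
  have hsf : Summable f := by rw [hfind]; exact hs.indicator _
  have hsupp : Function.support f ⊆ Set.range (fun p : Bool × List Bool => p.1 :: p.2) := by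
    intro u hu
    match u with
    | [] => simp [hfdef] at hu
    | b :: v => exact ⟨(b, v), rfl⟩
  have h1 : ∑' p : Bool × List Bool, f (p.1 :: p.2) = ∑' u, f u := cons_inj'.tsum_eq hsupp
  have hsp : Summable (fun p : Bool × List Bool => f (p.1 :: p.2)) :=
    hsf.comp_injective cons_inj'
  have h2 : ∑' p : Bool × List Bool, f (p.1 :: p.2) = ∑' b : Bool, ∑' v, f (b :: v) :=
    Summable.tsum_prod' hsp hsp.prod_factor
  have h3 : ∀ b v, f (b :: v) = h (b :: v) := by intro b v; simp [hfdef]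
  rw [← h1, h2]
  rw [tsum_fintype]
  simp only [h3, Fintype.sum_bool]
  ring
private lemma summable_Apart (ν : List Bool → ℝ) (t : ℝ) (U : Set (List Bool))
    (hsum : Summable fun u : U => ν u.val ^ t) (w : List Bool) :
    Summable (fun u : {u : List Bool // w ++ u ∈ U} => ν (w ++ u.val) ^ t) := by
  have hinj : Function.Injective
      (fun u : {u : List Bool // w ++ u ∈ U} => (⟨w ++ u.val, u.2⟩ : U)) := by
    intro a b hab
    apply Subtype.ext
    have := congrArg Subtype.val hab
    simpa using this
  have := hsum.comp_injective hinj
  exact this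

private lemma Apart_split (ν : List Bool → ℝ) (t : ℝ) (U : Set (List Bool))
    (hsum : Summable fun u : U => ν u.val ^ t) (w : List Bool) :
    (∑' u : {u : List Bool // w ++ u ∈ U}, ν (w ++ u.val) ^ t)
      = U.indicator (fun v => ν v ^ t) w
        + ((∑' u : {u : List Bool // (w ++ [false]) ++ u ∈ U}, ν ((w ++ [false]) ++ u.val) ^ t)
          + ∑' u : {u : List Bool // (w ++ [true]) ++ u ∈ U}, ν ((w ++ [true]) ++ u.val) ^ t) := by
  classical
  set h : List Bool → ℝ :=
    Set.indicator {u | w ++ u ∈ U} (fun u => ν (w ++ u) ^ t) with hh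
  have e1 : (∑' u : {u : List Bool // w ++ u ∈ U}, ν (w ++ u.val) ^ t) = ∑' u, h u :=
    tsum_subtype {u | w ++ u ∈ U} (fun u => ν (w ++ u) ^ t)
  have hsh : Summable h := by
    rw [hh, ← summable_subtype_iff_indicator]
    exact summable_Apart ν t U hsum w
  have hnil : h [] = U.indicator (fun v => ν v ^ t) w := by
    by_cases hw : w ∈ U <;> simp [hh, Set.indicator_apply, hw]
  have hcons : ∀ (b : Bool) (u : List Bool),
      h (b :: u) = Set.indicator {u | (w ++ [b]) ++ u ∈ U}
        (fun u => ν ((w ++ [b]) ++ u) ^ t) u := by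
    intro b u
    have hap : w ++ (b :: u) = (w ++ [b]) ++ u := List.append_cons w b u
    simp only [hh, Set.indicator_apply, Set.mem_setOf_eq, hap]
  have e2 : ∀ b : Bool, (∑' u, h (b :: u))
      = ∑' u : {u : List Bool // (w ++ [b]) ++ u ∈ U}, ν ((w ++ [b]) ++ u.val) ^ t := by
    intro b
    simp only [hcons]
    exact (tsum_subtype {u | (w ++ [b]) ++ u ∈ U} (fun u => ν ((w ++ [b]) ++ u) ^ t)).symm
  rw [e1, tsum_split_cons h hsh, hnil, e2 false, e2 true]
private lemma Bpart_split (ν : List Bool → ℝ) (t : ℝ) (U : Set (List Bool))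
    (w : List Bool) (b : Bool) :
    (∑ n ∈ Finset.range (w ++ [b]).length,
        U.indicator (fun v => ν v ^ t / 2 ^ ((w ++ [b]).length - n)) ((w ++ [b]).take n))
      = (∑ n ∈ Finset.range w.length,
          U.indicator (fun v => ν v ^ t / 2 ^ (w.length + 1 - n)) (w.take n))
        + U.indicator (fun v => ν v ^ t / 2) w := by
  classical
  have hl : (w ++ [b]).length = w.length + 1 := by simp
  simp only [hl]
  rw [Finset.sum_range_succ]
  congr 1
  · apply Finset.sum_congr rfl
    intro n hn
    have hn' : n ≤ w.length := le_of_lt (Finset.mem_range.mp hn)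
    rw [List.take_append_of_le_length hn']
  · have h1 : (w ++ [b]).take w.length = w := List.take_left
    rw [h1]
    simp

private lemma Bpart_combine (ν : List Bool → ℝ) (t : ℝ) (U : Set (List Bool)) (w : List Bool) :
    (∑ n ∈ Finset.range (w ++ [false]).length,
        U.indicator (fun v => ν v ^ t / 2 ^ ((w ++ [false]).length - n)) ((w ++ [false]).take n))
      + (∑ n ∈ Finset.range (w ++ [true]).length,
        U.indicator (fun v => ν v ^ t / 2 ^ ((w ++ [true]).length - n)) ((w ++ [true]).take n))
      = (∑ n ∈ Finset.range w.length,
          U.indicator (fun v => ν v ^ t / 2 ^ (w.length - n)) (w.take n))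
        + U.indicator (fun v => ν v ^ t) w := by
  classical
  rw [Bpart_split ν t U w false, Bpart_split ν t U w true]
  have hhalf : U.indicator (fun v => ν v ^ t / 2) w + U.indicator (fun v => ν v ^ t / 2) w
      = U.indicator (fun v => ν v ^ t) w := by
    by_cases hw : w ∈ U <;> simp [hw]
  have hsums : (∑ n ∈ Finset.range w.length,
        U.indicator (fun v => ν v ^ t / 2 ^ (w.length + 1 - n)) (w.take n))
      + (∑ n ∈ Finset.range w.length,
        U.indicator (fun v => ν v ^ t / 2 ^ (w.length + 1 - n)) (w.take n))
      = ∑ n ∈ Finset.range w.length,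
          U.indicator (fun v => ν v ^ t / 2 ^ (w.length - n)) (w.take n) := by
    rw [← Finset.sum_add_distrib]
    apply Finset.sum_congr rfl
    intro n hn
    have hn' : n < w.length := Finset.mem_range.mp hn
    have hsub : w.length + 1 - n = (w.length - n) + 1 := by omega
    by_cases hm : w.take n ∈ U
    · simp only [Set.indicator_of_mem hm, hsub, pow_succ]
      ring
    · simp [Set.indicator_of_notMem hm]
  calc _ = ((∑ n ∈ Finset.range w.length,
          U.indicator (fun v => ν v ^ t / 2 ^ (w.length + 1 - n)) (w.take n))
      + (∑ n ∈ Finset.range w.length,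
        U.indicator (fun v => ν v ^ t / 2 ^ (w.length + 1 - n)) (w.take n)))
      + (U.indicator (fun v => ν v ^ t / 2) w + U.indicator (fun v => ν v ^ t / 2) w) := by ring
    _ = _ := by rw [hhalf, hsums]
theorem dU_isGale
    (ν : List Bool → ℝ) (hν : IsProbMeasure ν) (hpos : ∀ w, 0 < ν w)
    (t : ℝ) (ht : 0 < t) (U : Set (List Bool))
    (hsum : Summable fun u : U => ν u.val ^ t) :
    IsGale ν t (dU ν t U) := by
  classical
  constructor
  · intro w
    unfold dU
    apply mul_nonneg (Real.rpow_nonneg (hpos w).le _)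
    apply add_nonneg
    · exact tsum_nonneg fun u => Real.rpow_nonneg (hpos _).le _
    · exact Finset.sum_nonneg fun n _ =>
        Set.indicator_nonneg
          (fun v _ => div_nonneg (Real.rpow_nonneg (hpos v).le t) (by positivity)) _
  · intro w
    have hcancel : ∀ v : List Bool, ν v ^ t * ν v ^ (-t) = 1 := by
      intro v
      rw [← Real.rpow_add (hpos v)]
      simp
    have hred : ∀ v : List Bool, ν v ^ t * dU ν t U v
        = (∑' u : {u : List Bool // v ++ u ∈ U}, ν (v ++ u.val) ^ t)
          + ∑ n ∈ Finset.range v.length,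
              U.indicator (fun x => ν x ^ t / 2 ^ (v.length - n)) (v.take n) := by
      intro v
      rw [dU, ← mul_assoc, hcancel v, one_mul]
    rw [hred, hred, hred]
    rw [Apart_split ν t U hsum w]
    have hB := Bpart_combine ν t U w
    linarith [hB]
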